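/- Let H = ⟨(1234)⟩ ≤ S₄ and S₃ the stabilizer of 4. Define f: S₄ → {±1} by f(σh) = f₀(h)(-1)^{ε(σ)ε(h)} for σ ∈ S₃, h ∈ H (using the unique factorization S₄ = S₃H), where f₀((1234)^z) = 1 for z ∈ {0,1} and -1 for z ∈ {2,3}, and sgn(g) = (-1)^{ε(g)}. Then f(gh) = f(g)f(h)(-1)^{ε(g)ε(h)} for all g ∈ S₄ and h ∈ H. -/

import Mathlib

open Equiv

abbrev S4 := Equiv.Perm (Fin 4)

/-- the 4-cycle (1234), zero-indexed as (0 1 2 3) -/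
def fourCycle : S4 := Equiv.swap 0 1 * Equiv.swap 1 2 * Equiv.swap 2 3

/-- H = ⟨(1234)⟩ ≤ S₄. -/
def Hsub : Subgroup S4 := Subgroup.zpowers fourCycle

/-- The copy of S₃ inside S₄ as the stabilizer of the last point. -/
def S3sub : Subgroup S4 := MulAction.stabilizer S4 (3 : Fin 4)

/-- ε(g) ∈ {0,1} defined by sgn(g) = (-1)^{ε(g)}. -/
def eps (g : S4) : ℕ := if Equiv.Perm.sign g = 1 then 0 else 1

/-- f₀((1234)^z) = 1 for z = 0,1 and -1 for z = 2,3, as a function on H. -/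
def f0 (g : S4) : ℤ := if g = 1 ∨ g = fourCycle then 1 else -1

/-- exponent in decomposition g = σ * fourCycle ^ kg g -/
def kg (g : S4) : ℕ := 3 - (g⁻¹ 3).val

/-- explicit value of f -/
def F (g : S4) : ℤ :=
  f0 (fourCycle ^ kg g) * (-1) ^ (eps (g * (fourCycle ^ kg g)⁻¹) * eps (fourCycle ^ kg g))

lemma sigma_fix : ∀ g : S4, (g * (fourCycle ^ kg g)⁻¹) 3 = 3 := by decide

lemma sigma_mem (g : S4) : g * (fourCycle ^ kg g)⁻¹ ∈ S3sub := by
  simpa [S3sub, MulAction.mem_stabilizer_iff, Perm.smul_def] using sigma_fix g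

lemma powMemH (n : ℕ) : fourCycle ^ n ∈ Hsub := ⟨(n : ℤ), by simp [zpow_natCast]⟩

lemma f_eq_F (f : S4 → ℤ)
    (hdef : ∀ σ ∈ S3sub, ∀ h ∈ Hsub, f (σ * h) = f0 h * (-1) ^ (eps σ * eps h))
    (g : S4) : f g = F g := by
  have := hdef _ (sigma_mem g) _ (powMemH (kg g))
  simpa [F, mul_assoc] using this

lemma mem_H (h : S4) (hh : h ∈ Hsub) : ∃ k : Fin 4, h = fourCycle ^ (k : ℕ) := by
  obtain ⟨n, rfl⟩ := hh
  show ∃ k : Fin 4, fourCycle ^ n = fourCycle ^ (k : ℕ)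
  have h4 : fourCycle ^ (4 : ℤ) = 1 := by decide
  have hmod : fourCycle ^ n = fourCycle ^ (n % 4) := by
    conv_lhs => rw [← Int.mul_ediv_add_emod n 4]
    rw [zpow_add, zpow_mul, h4, one_zpow, one_mul]
  have h0 : (0 : ℤ) ≤ n % 4 := Int.emod_nonneg n (by norm_num)
  have h1 : n % 4 < 4 := Int.emod_lt_of_pos n (by norm_num)
  refine ⟨⟨(n % 4).toNat, by omega⟩, ?_⟩
  rw [hmod]
  simp only [Fin.val_mk]
  rw [← zpow_natCast, Int.toNat_of_nonneg h0]

set_option maxRecDepth 100000 in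
lemma key : ∀ g : S4, ∀ k : Fin 4,
    F (g * fourCycle ^ (k : ℕ)) =
      F g * f0 (fourCycle ^ (k : ℕ)) * (-1) ^ (eps g * eps (fourCycle ^ (k : ℕ))) := by
  decide

/-- If f : S₄ → {±1} is defined by f(σh) = f₀(h)(-1)^{ε(σ)ε(h)} via the unique
factorization S₄ = S₃·H, then f(gh) = f(g)f(h)(-1)^{ε(g)ε(h)} for all g ∈ S₄, h ∈ H. -/
theorem f_twisted_hom (f : S4 → ℤ)
    (hdef : ∀ σ ∈ S3sub, ∀ h ∈ Hsub, f (σ * h) = f0 h * (-1) ^ (eps σ * eps h)) :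
    ∀ g : S4, ∀ h ∈ Hsub, f (g * h) = f g * f h * (-1) ^ (eps g * eps h) := by
  intro g h hh
  obtain ⟨k, rfl⟩ := mem_H h hh
  have hfh : f (fourCycle ^ (k : ℕ)) = f0 (fourCycle ^ (k : ℕ)) := by
    have h1 : (1 : S4) ∈ S3sub := one_mem _
    have := hdef 1 h1 _ (powMemH (k : ℕ))
    simpa [eps] using this
  rw [f_eq_F f hdef (g * fourCycle ^ (k : ℕ)), f_eq_F f hdef g, hfh]
  exact key g k
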